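/- If suf(i) and suf(j) both start with the same first character t, suf(i) is an L-suffix, and suf(j) is an S-suffix, then suf(i) < suf(j) lexicographically. -/

import Mathlib

variable {α : Type*}

/-- The suffix of `T` starting at (1-based) position `i`. -/
def Suf (T : List α) (i : ℕ) : List α := T.drop (i - 1)

/-- The (1-based) `i`-th character of `T`, i.e. the first character of `Suf T i`. -/
def Chr [Inhabited α] (T : List α) (i : ℕ) : α := (Suf T i).headI

/-- `Suf T i` is lexicographically smaller than `Suf T j`. -/
def SufLt [LT α] (T : List α) (i j : ℕ) : Prop := List.Lex (· < ·) (Suf T i) (Suf T j)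

/-- `Suf T i` is an S-suffix (position in range, and `i = N` or `suf i < suf (i+1)`). -/
def IsS [LinearOrder α] (T : List α) (i : ℕ) : Prop :=
  1 ≤ i ∧ i ≤ T.length ∧ (i = T.length ∨ SufLt T i (i + 1))

/-- `Suf T i` is an L-suffix (position in range and not an S-suffix). -/
def IsL [LinearOrder α] (T : List α) (i : ℕ) : Prop :=
  1 ≤ i ∧ i ≤ T.length ∧ ¬ (i = T.length ∨ SufLt T i (i + 1))

/-- `Suf T i` is an LMS-suffix: an S-suffix whose preceding suffix is an L-suffix. -/
def IsLMS [LinearOrder α] (T : List α) (i : ℕ) : Prop :=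
  1 < i ∧ IsS T i ∧ IsL T (i - 1)

/-- The last character of `T` is strictly smaller than every other character of `T`. -/
def LastSmallest [Inhabited α] [LinearOrder α] (T : List α) : Prop :=
  ∀ i, 1 ≤ i → i < T.length → Chr T T.length < Chr T i


lemma suf_cons [Inhabited α] (T : List α) {i : ℕ} (h1 : 1 ≤ i) (h2 : i ≤ T.length) :
    Suf T i = Chr T i :: Suf T (i + 1) := by
  have hlt : i - 1 < T.length := by omega
  have hd : T.drop (i - 1) = T[i - 1] :: T.drop (i - 1 + 1) := List.drop_eq_getElem_cons hlt
  have he : i - 1 + 1 = i := by omega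
  have he2 : i + 1 - 1 = i := by omega
  unfold Chr Suf
  rw [he2, hd, he]
  rfl

lemma suf_length (T : List α) (i : ℕ) : (Suf T i).length = T.length - (i - 1) := by
  simp [Suf]

lemma lex_conn [LinearOrder α] {l l' : List α} (h : ¬ List.Lex (· < ·) l l') (hne : l ≠ l') :
    List.Lex (· < ·) l' l := by
  rcases @trichotomous _ (List.Lex (· < ·)) (List.Lex.trichotomous _) l l' with h1 | h1 | h1
  · exact absurd h1 h
  · exact absurd h1 hne
  · exact h1

lemma lex_cons_inv {r : α → α → Prop} {a b : α} {l₁ l₂ : List α}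
    (h : List.Lex r (a :: l₁) (b :: l₂)) : r a b ∨ (a = b ∧ List.Lex r l₁ l₂) := by
  cases h with
  | rel h => exact Or.inl h
  | cons h => exact Or.inr ⟨rfl, h⟩

lemma lex_asymm [LinearOrder α] {l l' : List α} (h : List.Lex (· < ·) l l') :
    ¬ List.Lex (· < ·) l' l :=
  (List.Lex.asymm (· < ·)).asymm _ _ h

lemma stmt3_aux [Inhabited α] [LinearOrder α] (T : List α) (hlast : LastSmallest T) :
    ∀ (k i j : ℕ) (t : α), T.length - i ≤ k → IsL T i → IsS T j →
      Chr T i = t → Chr T j = t → SufLt T i j := by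
  intro k
  induction k with
  | zero =>
    intro i j t hk hL _ _ _
    obtain ⟨hi1, hiN, hnot⟩ := hL
    exact absurd (by omega : i = T.length) (fun h => hnot (Or.inl h))
  | succ k ih =>
    intro i j t hk hL hS hti htj
    obtain ⟨hi1, hiN, hnot⟩ := hL
    obtain ⟨hj1, hjN, hSor⟩ := hS
    have hiltN : i < T.length := lt_of_le_of_ne hiN (fun h => hnot (Or.inl h))
    -- j ≠ N
    have hjltN : j < T.length := by
      rcases lt_or_eq_of_le hjN with h | h
      · exact h
      · exfalso
        have := hlast i hi1 hiltN
        rw [← h, htj, hti] at this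
        exact lt_irrefl t this
    -- decompositions
    have hdi : Suf T i = t :: Suf T (i + 1) := by rw [suf_cons T hi1 hiN, hti]
    have hdj : Suf T j = t :: Suf T (j + 1) := by rw [suf_cons T hj1 hjN, htj]
    set a := Chr T (i + 1) with ha
    set b := Chr T (j + 1) with hb
    have hdi1 : Suf T (i + 1) = a :: Suf T (i + 2) := suf_cons T (by omega) (by omega)
    have hdj1 : Suf T (j + 1) = b :: Suf T (j + 2) := suf_cons T (by omega) (by omega)
    -- from L: suf (i+1) < suf i
    have hne : Suf T i ≠ Suf T (i + 1) := by
      intro h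
      have := congrArg List.length h
      rw [suf_length, suf_length] at this
      omega
    have hLi : List.Lex (· < ·) (Suf T (i + 1)) (Suf T i) :=
      lex_conn (fun h => hnot (Or.inr h)) hne
    -- from S: suf j < suf (j+1)
    have hSj : List.Lex (· < ·) (Suf T j) (Suf T (j + 1)) := by
      rcases hSor with h | h
      · omega
      · exact h
    rw [hdi, hdi1] at hLi
    rw [hdj, hdj1] at hSj
    -- invert
    have hi' : a < t ∨ (a = t ∧ List.Lex (· < ·) (Suf T (i + 2)) (Suf T (i + 1))) := by
      rcases lex_cons_inv hLi with h | ⟨h, h'⟩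
      · exact Or.inl h
      · exact Or.inr ⟨h, by rwa [hdi1]⟩
    have hj' : t < b ∨ (t = b ∧ List.Lex (· < ·) (Suf T (j + 1)) (Suf T (j + 2))) := by
      rcases lex_cons_inv hSj with h | ⟨h, h'⟩
      · exact Or.inl h
      · exact Or.inr ⟨h, by rw [hdj1]; exact h'⟩
    show List.Lex (· < ·) (Suf T i) (Suf T j)
    rw [hdi, hdj]
    apply List.Lex.cons
    rw [hdi1, hdj1]
    rcases hi' with hia | ⟨hia, hLi1⟩
    · rcases hj' with hjb | ⟨hjb, _⟩
      · exact List.Lex.rel (lt_trans hia hjb)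
      · exact List.Lex.rel (hjb ▸ hia)
    · rcases hj' with hjb | ⟨hjb, hSj1⟩
      · exact List.Lex.rel (by rw [hia]; exact hjb)
      · -- recursive case: a = t = b
        have hi1N : i + 1 < T.length := by
          rcases lt_or_eq_of_le (by omega : i + 1 ≤ T.length) with h | h
          · exact h
          · exfalso
            have := hlast i hi1 hiltN
            rw [← h, ← ha, hia, hti] at this
            exact lt_irrefl t this
        have hLnext : IsL T (i + 1) := by
          refine ⟨by omega, by omega, fun h => ?_⟩
          rcases h with h | h
          · omega
          · exact lex_asymm hLi1 h
        have hSnext : IsS T (j + 1) := ⟨by omega, by omega, Or.inr hSj1⟩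
        have := ih (i + 1) (j + 1) t (by omega) hLnext hSnext hia hjb.symm
        rw [← hdi1, ← hdj1]
        exact this


/-- If `suf i` and `suf j` start with the same character `t`, `suf i` is an L-suffix and
`suf j` is an S-suffix, then `suf i < suf j` lexicographically. -/
theorem stmt3 [Inhabited α] [LinearOrder α] (T : List α) (hlast : LastSmallest T)
    (i j : ℕ) (t : α) (hL : IsL T i) (hS : IsS T j)
    (hti : Chr T i = t) (htj : Chr T j = t) :
    SufLt T i j := by
  exact stmt3_aux T hlast T.length i j t (by omega) hL hS hti htj
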